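/- Let the Bermudan put recursion be defined by V_M(S) = max{0, K - S}, Ṽ_{m-1}(S) = e^{-2r_mτ_m/σ_m²} ∫_0^∞ V_m(Sz) ρ_m(z,1) dz, and V_{m-1}(S) = max{Ṽ_{m-1}(S), K - S}. If q_m ≥ 0 for all m, then for every 1 ≤ m ≤ M-1 and all 0 < S_1 < S_2: 0 < Ṽ_m(S_1) - Ṽ_m(S_2) < S_2 - S_1. In particular Ṽ_m is strictly decreasing and S ↦ Ṽ_m(S) + S is strictly increasing. -/

import Mathlib

open MeasureTheory

/-- `τ_m = σ_m² (t_m - t_{m-1}) / 2`. -/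
noncomputable def tauBS (σ t : ℕ → ℝ) (m : ℕ) : ℝ := (σ m)^2 * (t m - t (m - 1)) / 2

/-- The lognormal density `ρ_m(z,1)` of the Black–Scholes model. -/
noncomputable def rho1BS (r q σ t : ℕ → ℝ) (m : ℕ) (z : ℝ) : ℝ :=
  1 / (2 * Real.sqrt (Real.pi * tauBS σ t m) * z) *
    Real.exp (-(Real.log z -
      (2 / (σ m)^2) * (r m - q m - (σ m)^2 / 2) * tauBS σ t m)^2 / (4 * tauBS σ t m))

open Set Real


noncomputable def psiAux (τ μ z : ℝ) : ℝ :=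
  1 / (2 * Real.sqrt (Real.pi * τ) * z) *
    Real.exp (-(Real.log z - μ)^2 / (4 * τ))

lemma gauss_integrable {τ : ℝ} (hτ : 0 < τ) (a : ℝ) :
    Integrable (fun x : ℝ => Real.exp (-(x - a)^2 / (4*τ))) := by
  have h : (fun x : ℝ => Real.exp (-(x - a)^2 / (4*τ)))
      = fun x : ℝ => (fun y : ℝ => Real.exp (-(1/(4*τ)) * y^2)) (x - a) := by
    funext x; congr 1; field_simp
  rw [h]
  exact (integrable_exp_neg_mul_sq (by positivity)).comp_sub_right a

lemma gauss_integral {τ : ℝ} (hτ : 0 < τ) (a : ℝ) :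
    ∫ x : ℝ, Real.exp (-(x - a)^2 / (4*τ)) = 2 * Real.sqrt (Real.pi * τ) := by
  have h : (fun x : ℝ => Real.exp (-(x - a)^2 / (4*τ)))
      = fun x : ℝ => (fun y : ℝ => Real.exp (-(1/(4*τ)) * y^2)) (x - a) := by
    funext x; congr 1; field_simp
  rw [h, integral_sub_right_eq_self (fun y : ℝ => Real.exp (-(1/(4*τ)) * y^2)) a,
    integral_gaussian]
  rw [show Real.pi / (1/(4*τ)) = 2^2 * (Real.pi * τ) by field_simp; ring,
    Real.sqrt_mul (by norm_num) _, Real.sqrt_sq (by norm_num)]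

lemma integral_Ioi_exp_subst (g : ℝ → ℝ) :
    ∫ z in Set.Ioi (0:ℝ), g z = ∫ x : ℝ, Real.exp x * g (Real.exp x) := by
  have h := integral_image_eq_integral_abs_deriv_smul (s := (Set.univ : Set ℝ))
    (f := Real.exp) (f' := Real.exp) MeasurableSet.univ
    (fun x _ => (Real.hasDerivAt_exp x).hasDerivWithinAt)
    (Real.exp_injective.injOn) g
  rw [Set.image_univ, Real.range_exp] at h
  rw [h, MeasureTheory.setIntegral_univ]
  congr 1; funext x
  rw [abs_of_pos (Real.exp_pos x), smul_eq_mul]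

lemma integrableOn_Ioi_exp_subst (g : ℝ → ℝ) :
    IntegrableOn g (Set.Ioi (0:ℝ)) ↔
      Integrable (fun x : ℝ => Real.exp x * g (Real.exp x)) := by
  have h := integrableOn_image_iff_integrableOn_abs_deriv_smul (s := (Set.univ : Set ℝ))
    (f := Real.exp) (f' := Real.exp) MeasurableSet.univ
    (fun x _ => (Real.hasDerivAt_exp x).hasDerivWithinAt)
    (Real.exp_injective.injOn) g
  rw [Set.image_univ, Real.range_exp] at h
  rw [h, integrableOn_univ]
  constructor <;> intro h' <;> [skip; skip] <;>
    · refine h'.congr (Filter.Eventually.of_forall fun x => ?_)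
      simp [abs_of_pos (Real.exp_pos x), smul_eq_mul]

lemma psi_measurable (τ μ : ℝ) : Measurable (psiAux τ μ) := by
  unfold psiAux
  exact ((measurable_const.div ((measurable_const.mul measurable_id'))).mul
    ((((Real.measurable_log.sub measurable_const).pow_const 2).neg.div_const _).exp))

lemma psi_pos {τ : ℝ} (hτ : 0 < τ) (μ : ℝ) {z : ℝ} (hz : 0 < z) :
    0 < psiAux τ μ z := by
  unfold psiAux
  have h : 0 < Real.sqrt (Real.pi * τ) := Real.sqrt_pos.2 (by positivity)
  positivity

lemma psi_subst {τ : ℝ} (hτ : 0 < τ) (μ : ℝ) (x : ℝ) :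
    Real.exp x * psiAux τ μ (Real.exp x)
      = 1 / (2 * Real.sqrt (Real.pi * τ)) * Real.exp (-(x - μ)^2 / (4*τ)) := by
  unfold psiAux
  rw [Real.log_exp]
  have h : Real.sqrt (Real.pi * τ) ≠ 0 := ne_of_gt (Real.sqrt_pos.2 (by positivity))
  have he : Real.exp x ≠ 0 := Real.exp_ne_zero x
  field_simp

lemma psi_integrableOn {τ : ℝ} (hτ : 0 < τ) (μ : ℝ) :
    IntegrableOn (psiAux τ μ) (Set.Ioi (0:ℝ)) := by
  rw [integrableOn_Ioi_exp_subst]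
  have : (fun x : ℝ => Real.exp x * psiAux τ μ (Real.exp x))
      = fun x : ℝ => 1 / (2 * Real.sqrt (Real.pi * τ)) * Real.exp (-(x - μ)^2 / (4*τ)) := by
    funext x; exact psi_subst hτ μ x
  rw [this]
  exact (gauss_integrable hτ μ).const_mul _

lemma psi_integral {τ : ℝ} (hτ : 0 < τ) (μ : ℝ) :
    ∫ z in Set.Ioi (0:ℝ), psiAux τ μ z = 1 := by
  rw [integral_Ioi_exp_subst]
  have : (fun x : ℝ => Real.exp x * psiAux τ μ (Real.exp x))
      = fun x : ℝ => 1 / (2 * Real.sqrt (Real.pi * τ)) * Real.exp (-(x - μ)^2 / (4*τ)) := by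
    funext x; exact psi_subst hτ μ x
  rw [this, integral_const_mul, gauss_integral hτ μ]
  have h : Real.sqrt (Real.pi * τ) ≠ 0 := ne_of_gt (Real.sqrt_pos.2 (by positivity))
  field_simp

lemma psi_z_subst {τ : ℝ} (hτ : 0 < τ) (μ : ℝ) (x : ℝ) :
    Real.exp x * (Real.exp x * psiAux τ μ (Real.exp x))
      = 1 / (2 * Real.sqrt (Real.pi * τ)) *
          (Real.exp (μ + τ) * Real.exp (-(x - (μ + 2*τ))^2 / (4*τ))) := by
  rw [psi_subst hτ μ x]
  rw [show Real.exp x * (1 / (2 * Real.sqrt (Real.pi * τ)) * Real.exp (-(x - μ)^2 / (4*τ)))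
      = 1 / (2 * Real.sqrt (Real.pi * τ)) * (Real.exp x * Real.exp (-(x - μ)^2 / (4*τ))) by ring]
  congr 1
  rw [← Real.exp_add, ← Real.exp_add]
  congr 1
  field_simp
  ring

lemma psi_z_integrableOn {τ : ℝ} (hτ : 0 < τ) (μ : ℝ) :
    IntegrableOn (fun z => z * psiAux τ μ z) (Set.Ioi (0:ℝ)) := by
  rw [integrableOn_Ioi_exp_subst]
  have : (fun x : ℝ => Real.exp x * (Real.exp x * psiAux τ μ (Real.exp x)))
      = fun x : ℝ => 1 / (2 * Real.sqrt (Real.pi * τ)) *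
          (Real.exp (μ + τ) * Real.exp (-(x - (μ + 2*τ))^2 / (4*τ))) := by
    funext x; exact psi_z_subst hτ μ x
  rw [this]
  exact ((gauss_integrable hτ (μ + 2*τ)).const_mul _).const_mul _

lemma psi_z_integral {τ : ℝ} (hτ : 0 < τ) (μ : ℝ) :
    ∫ z in Set.Ioi (0:ℝ), z * psiAux τ μ z = Real.exp (μ + τ) := by
  rw [integral_Ioi_exp_subst]
  have : (fun x : ℝ => Real.exp x * (Real.exp x * psiAux τ μ (Real.exp x)))
      = fun x : ℝ => 1 / (2 * Real.sqrt (Real.pi * τ)) *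
          (Real.exp (μ + τ) * Real.exp (-(x - (μ + 2*τ))^2 / (4*τ))) := by
    funext x; exact psi_z_subst hτ μ x
  rw [this, integral_const_mul, integral_const_mul,
    gauss_integral hτ (μ + 2*τ)]
  have h : Real.sqrt (Real.pi * τ) ≠ 0 := ne_of_gt (Real.sqrt_pos.2 (by positivity))
  field_simp

lemma rho1BS_eq_psi (r q σ t : ℕ → ℝ) (m : ℕ) :
    rho1BS r q σ t m = psiAux (tauBS σ t m)
      ((2 / (σ m)^2) * (r m - q m - (σ m)^2 / 2) * tauBS σ t m) := by
  funext z; rfl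

/-- Invariant for the value functions in the Bermudan recursion. -/
def InvP (K C : ℝ) (W : ℝ → ℝ) : Prop :=
  (∀ s, 0 < s → 0 ≤ W s ∧ W s ≤ C) ∧
  (∀ a b, 0 < a → a ≤ b → W b ≤ W a) ∧
  (∀ a b, 0 < a → a < b → W a - W b ≤ b - a) ∧
  (∀ a b, 0 < a → a < b → b < K → 0 < W a - W b) ∧
  (∀ a b, K < a → a < b → W a - W b < b - a)

lemma aesm_comp_mul {W : ℝ → ℝ} {C : ℝ}
    (hmono : ∀ a b, 0 < a → a ≤ b → W b ≤ W a)
    (hbd : ∀ s, 0 < s → W s ≤ C) {S : ℝ} (hS : 0 < S) :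
    AEStronglyMeasurable (fun z => W (S * z)) (volume.restrict (Set.Ioi (0:ℝ))) := by
  set W' : ℝ → ℝ := fun z => if 0 < z then W (S * z) else C with hW'
  have hA : Antitone W' := by
    intro a b hab
    by_cases ha : 0 < a
    · have hb : 0 < b := lt_of_lt_of_le ha hab
      simp only [hW', if_pos ha, if_pos hb]
      exact hmono (S * a) (S * b) (by positivity) (by nlinarith)
    · by_cases hb : 0 < b
      · simp only [hW', if_neg ha, if_pos hb]
        exact hbd (S * b) (by positivity)
      · simp only [hW', if_neg ha, if_neg hb]; exact le_refl _
  refine (hA.measurable.aestronglyMeasurable).congr ?_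
  rw [Filter.EventuallyEq, ae_restrict_iff' measurableSet_Ioi]
  exact Filter.Eventually.of_forall fun z hz => by
    simp only [hW', if_pos (Set.mem_Ioi.1 hz)]

section RhoFacts

variable (r q σ t : ℕ → ℝ) (m : ℕ)

lemma rho_measurable : Measurable (rho1BS r q σ t m) := by
  rw [rho1BS_eq_psi]; exact psi_measurable _ _

lemma rho_pos (hτ : 0 < tauBS σ t m) {z : ℝ} (hz : 0 < z) :
    0 < rho1BS r q σ t m z := by
  rw [rho1BS_eq_psi]; exact psi_pos hτ _ hz

lemma rho_integrableOn (hτ : 0 < tauBS σ t m) :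
    IntegrableOn (rho1BS r q σ t m) (Set.Ioi (0:ℝ)) := by
  rw [rho1BS_eq_psi]; exact psi_integrableOn hτ _

lemma rho_integral (hτ : 0 < tauBS σ t m) :
    ∫ z in Set.Ioi (0:ℝ), rho1BS r q σ t m z = 1 := by
  rw [rho1BS_eq_psi]; exact psi_integral hτ _

lemma rho_z_integrableOn (hτ : 0 < tauBS σ t m) :
    IntegrableOn (fun z => z * rho1BS r q σ t m z) (Set.Ioi (0:ℝ)) := by
  rw [rho1BS_eq_psi]; exact psi_z_integrableOn hτ _

lemma rho_z_integral (hσ : 0 < σ m) (hτ : 0 < tauBS σ t m) :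
    ∫ z in Set.Ioi (0:ℝ), z * rho1BS r q σ t m z
      = Real.exp (2 * (r m - q m) * tauBS σ t m / (σ m)^2) := by
  rw [rho1BS_eq_psi, psi_z_integral hτ _]
  congr 1
  have hσ2 : (σ m)^2 ≠ 0 := by positivity
  field_simp
  ring

/-- Integrability and basic bounds for the payoff integral. -/
lemma intW (hτ : 0 < tauBS σ t m) {C : ℝ} {W : ℝ → ℝ}
    (hbd : ∀ s, 0 < s → 0 ≤ W s ∧ W s ≤ C)
    (hmono : ∀ a b, 0 < a → a ≤ b → W b ≤ W a)
    {S : ℝ} (hS : 0 < S) :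
    IntegrableOn (fun z => W (S * z) * rho1BS r q σ t m z) (Set.Ioi (0:ℝ)) ∧
      0 ≤ ∫ z in Set.Ioi (0:ℝ), W (S * z) * rho1BS r q σ t m z ∧
      (∫ z in Set.Ioi (0:ℝ), W (S * z) * rho1BS r q σ t m z) ≤ C := by
  have hmeas : AEStronglyMeasurable (fun z => W (S * z) * rho1BS r q σ t m z)
      (volume.restrict (Set.Ioi (0:ℝ))) :=
    (aesm_comp_mul hmono (fun s hs => (hbd s hs).2) hS).mul
      (rho_measurable r q σ t m).aestronglyMeasurable.restrict
  have hdom : ∀ z ∈ Set.Ioi (0:ℝ),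
      ‖W (S * z) * rho1BS r q σ t m z‖ ≤ C * rho1BS r q σ t m z := by
    intro z hz
    have hz' : (0:ℝ) < z := hz
    have hρ := rho_pos r q σ t m hτ hz'
    have hw := hbd (S * z) (by positivity)
    rw [Real.norm_eq_abs, abs_of_nonneg (mul_nonneg hw.1 hρ.le)]
    exact mul_le_mul_of_nonneg_right hw.2 hρ.le
  have hint : IntegrableOn (fun z => W (S * z) * rho1BS r q σ t m z) (Set.Ioi (0:ℝ)) := by
    refine Integrable.mono ((rho_integrableOn r q σ t m hτ).const_mul C) hmeas ?_
    rw [ae_restrict_iff' measurableSet_Ioi]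
    refine Filter.Eventually.of_forall fun z hz => ?_
    refine (hdom z hz).trans ?_
    rw [Real.norm_eq_abs]
    exact le_abs_self _
  refine ⟨hint, ?_, ?_⟩
  · refine setIntegral_nonneg measurableSet_Ioi fun z hz => ?_
    exact mul_nonneg (hbd (S * z) (mul_pos hS (Set.mem_Ioi.1 hz))).1
      (rho_pos r q σ t m hτ (Set.mem_Ioi.1 hz)).le
  · have := setIntegral_mono_on hint ((rho_integrableOn r q σ t m hτ).const_mul C)
      measurableSet_Ioi (fun z hz => ?_)
    · calc (∫ z in Set.Ioi (0:ℝ), W (S * z) * rho1BS r q σ t m z)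
          ≤ ∫ z in Set.Ioi (0:ℝ), C * rho1BS r q σ t m z := this
        _ = C := by rw [integral_const_mul, rho_integral r q σ t m hτ, mul_one]
    · have hρ := rho_pos r q σ t m hτ (Set.mem_Ioi.1 hz)
      exact mul_le_mul_of_nonneg_right
        (hbd (S * z) (mul_pos hS (Set.mem_Ioi.1 hz))).2 hρ.le

end RhoFacts

/-- Key integral step: strict monotonicity and strict sub-Lipschitz bound for the
continuation value integral. -/
lemma step (r q σ t : ℕ → ℝ) (m : ℕ) (hσ : 0 < σ m) (hτ : 0 < tauBS σ t m)
    (hqm : 0 ≤ q m) (K C : ℝ) (hK : 0 < K) (W : ℝ → ℝ) (hW : InvP K C W)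
    {S1 S2 : ℝ} (h1 : 0 < S1) (h12 : S1 < S2) :
    0 < (∫ z in Set.Ioi (0:ℝ), W (S1 * z) * rho1BS r q σ t m z) -
        (∫ z in Set.Ioi (0:ℝ), W (S2 * z) * rho1BS r q σ t m z) ∧
    Real.exp (-2 * r m * tauBS σ t m / (σ m)^2) *
        ((∫ z in Set.Ioi (0:ℝ), W (S1 * z) * rho1BS r q σ t m z) -
         (∫ z in Set.Ioi (0:ℝ), W (S2 * z) * rho1BS r q σ t m z)) < S2 - S1 := by
  obtain ⟨hbd, hmono, hlip, hposK, hltK⟩ := hW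
  have h2 : 0 < S2 := h1.trans h12
  set ρ : ℝ → ℝ := rho1BS r q σ t m with hρ
  obtain ⟨hint1, hnn1, hub1⟩ := intW r q σ t m hτ hbd hmono h1
  obtain ⟨hint2, hnn2, hub2⟩ := intW r q σ t m hτ hbd hmono h2
  set F : ℝ → ℝ := fun z => (W (S1 * z) - W (S2 * z)) * ρ z with hF
  set G : ℝ → ℝ := fun z => ((S2 - S1) * z) * ρ z with hG
  have hFint : IntegrableOn F (Set.Ioi (0:ℝ)) :=
    IntegrableOn.congr_fun (hint1.sub hint2)
      (fun z _ => by simp [hF, hρ, Pi.sub_apply, sub_mul]) measurableSet_Ioi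
  have hGint : IntegrableOn G (Set.Ioi (0:ℝ)) :=
    IntegrableOn.congr_fun ((rho_z_integrableOn r q σ t m hτ).const_mul (S2 - S1))
      (fun z _ => by simp only [hG]; ring) measurableSet_Ioi
  have hdiff : (∫ z in Set.Ioi (0:ℝ), W (S1 * z) * ρ z) -
      (∫ z in Set.Ioi (0:ℝ), W (S2 * z) * ρ z) = ∫ z in Set.Ioi (0:ℝ), F z := by
    rw [← integral_sub hint1 hint2]
    refine setIntegral_congr_fun measurableSet_Ioi fun z _ => ?_
    simp [hF, hρ, sub_mul]
  have hFnn : ∀ z ∈ Set.Ioi (0:ℝ), 0 ≤ F z := by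
    intro z hz
    have hz' : (0:ℝ) < z := hz
    refine mul_nonneg (sub_nonneg.2 ?_) (rho_pos r q σ t m hτ hz').le
    exact hmono (S1 * z) (S2 * z) (by positivity) (by nlinarith)
  -- lower bound
  have hlow : 0 < ∫ z in Set.Ioi (0:ℝ), F z := by
    rw [setIntegral_pos_iff_support_of_nonneg_ae
      ((ae_restrict_iff' measurableSet_Ioi).2 (Filter.Eventually.of_forall hFnn)) hFint]
    have hsub : Set.Ioo (0:ℝ) (K / S2) ⊆ Function.support F ∩ Set.Ioi 0 := by
      intro z hz
      obtain ⟨hz0, hzK⟩ := hz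
      have hb : S2 * z < K := by
        rw [lt_div_iff₀ h2] at hzK; linarith [hzK]
      have hFpos : 0 < F z := by
        refine mul_pos (sub_pos.2 ?_) (rho_pos r q σ t m hτ hz0)
        have := hposK (S1 * z) (S2 * z) (mul_pos h1 hz0) (by nlinarith) hb
        linarith
      exact ⟨Function.mem_support.2 (ne_of_gt hFpos), hz0⟩
    refine lt_of_lt_of_le ?_ (measure_mono hsub)
    rw [Real.volume_Ioo]
    refine ENNReal.ofReal_pos.2 ?_
    rw [sub_zero]
    exact div_pos hK h2
  -- upper bound
  have hFG : ∀ z ∈ Set.Ioi (0:ℝ), F z ≤ G z := by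
    intro z hz
    have hz' : (0:ℝ) < z := hz
    refine mul_le_mul_of_nonneg_right ?_ (rho_pos r q σ t m hτ hz').le
    have := hlip (S1 * z) (S2 * z) (by positivity) (by nlinarith)
    nlinarith
  have hup : (∫ z in Set.Ioi (0:ℝ), F z) < ∫ z in Set.Ioi (0:ℝ), G z := by
    have hpos : 0 < ∫ z in Set.Ioi (0:ℝ), G z - F z := by
      rw [setIntegral_pos_iff_support_of_nonneg_ae
        ((ae_restrict_iff' measurableSet_Ioi).2
          (Filter.Eventually.of_forall fun z hz => sub_nonneg.2 (hFG z hz)))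
        (hGint.sub hFint)]
      have hsub : Set.Ioi (K / S1) ⊆ Function.support (fun z => G z - F z) ∩ Set.Ioi 0 := by
        intro z hz
        have hz1 : K / S1 < z := hz
        have hz0 : (0:ℝ) < z := lt_trans (by positivity) hz1
        have hKa : K < S1 * z := by
          rw [div_lt_iff₀ h1] at hz1; linarith [hz1]
        have : W (S1 * z) - W (S2 * z) < S2 * z - S1 * z :=
          hltK (S1 * z) (S2 * z) hKa (by nlinarith)
        have hGFpos : 0 < G z - F z := by
          have hρp := rho_pos r q σ t m hτ hz0
          have : (W (S1 * z) - W (S2 * z)) * ρ z < ((S2 - S1) * z) * ρ z := by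
            refine mul_lt_mul_of_pos_right ?_ hρp
            nlinarith
          simpa [hF, hG, sub_pos] using this
        exact ⟨Function.mem_support.2 (ne_of_gt hGFpos), hz0⟩
      refine lt_of_lt_of_le ?_ (measure_mono hsub)
      rw [Real.volume_Ioi]
      exact ENNReal.zero_lt_top
    have := integral_sub hGint hFint
    rw [this] at hpos
    linarith
  have hGval : (∫ z in Set.Ioi (0:ℝ), G z)
      = (S2 - S1) * Real.exp (2 * (r m - q m) * tauBS σ t m / (σ m)^2) := by
    have : (∫ z in Set.Ioi (0:ℝ), G z)
        = ∫ z in Set.Ioi (0:ℝ), (S2 - S1) * (z * ρ z) := by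
      refine setIntegral_congr_fun measurableSet_Ioi fun z _ => ?_
      simp [hG]; ring
    rw [this, integral_const_mul, hρ, rho_z_integral r q σ t m hσ hτ]
  constructor
  · rw [hdiff]; exact hlow
  · rw [hdiff]
    have hD : 0 < Real.exp (-2 * r m * tauBS σ t m / (σ m)^2) := Real.exp_pos _
    calc Real.exp (-2 * r m * tauBS σ t m / (σ m)^2) * ∫ z in Set.Ioi (0:ℝ), F z
        < Real.exp (-2 * r m * tauBS σ t m / (σ m)^2) * ∫ z in Set.Ioi (0:ℝ), G z := by
          exact mul_lt_mul_of_pos_left hup hD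
      _ = (S2 - S1) * Real.exp (-2 * q m * tauBS σ t m / (σ m)^2) := by
          rw [hGval, ← mul_assoc, mul_comm (Real.exp _) (S2 - S1), mul_assoc,
            ← Real.exp_add]
          congr 2
          ring
      _ ≤ (S2 - S1) * 1 := by
          refine mul_le_mul_of_nonneg_left ?_ (by linarith)
          rw [Real.exp_le_one_iff,
            show -2 * q m * tauBS σ t m / (σ m)^2
              = -(2 * q m * tauBS σ t m / (σ m)^2) by ring]
          refine neg_nonpos.2 (div_nonneg ?_ (by positivity))
          exact mul_nonneg (mul_nonneg (by norm_num) hqm) hτ.le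
      _ = S2 - S1 := mul_one _

/-- Strict bounds for the continuation value at level `k-1` given the invariant at level `k`. -/
lemma vt_strict (K : ℝ) (hK : 0 < K) (r q σ t : ℕ → ℝ) (k : ℕ)
    (hσ : 0 < σ k) (hτ : 0 < tauBS σ t k) (hqk : 0 ≤ q k)
    (V Vt : ℕ → ℝ → ℝ)
    (hVtk : ∀ S : ℝ, 0 < S → Vt (k-1) S =
      Real.exp (-2 * r k * tauBS σ t k / (σ k)^2) *
        ∫ z in Set.Ioi (0:ℝ), V k (S * z) * rho1BS r q σ t k z)
    (C : ℝ) (hC : InvP K C (V k)) :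
    ∀ a b : ℝ, 0 < a → a < b →
      0 < Vt (k-1) a - Vt (k-1) b ∧ Vt (k-1) a - Vt (k-1) b < b - a := by
  intro a b ha hab
  have hb : 0 < b := ha.trans hab
  have hs := step r q σ t k hσ hτ hqk K C hK (V k) hC ha hab
  rw [hVtk a ha, hVtk b hb, ← mul_sub]
  exact ⟨mul_pos (Real.exp_pos _) hs.1, hs.2⟩

/-- The invariant propagates backwards through the recursion. -/
lemma inv_transfer (K : ℝ) (hK : 0 < K) (r q σ t : ℕ → ℝ) (k : ℕ)
    (hσ : 0 < σ k) (hτ : 0 < tauBS σ t k) (hqk : 0 ≤ q k)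
    (V Vt : ℕ → ℝ → ℝ)
    (hVtk : ∀ S : ℝ, 0 < S → Vt (k-1) S =
      Real.exp (-2 * r k * tauBS σ t k / (σ k)^2) *
        ∫ z in Set.Ioi (0:ℝ), V k (S * z) * rho1BS r q σ t k z)
    (hVk : ∀ S : ℝ, 0 < S → V (k-1) S = max (Vt (k-1) S) (K - S))
    (C : ℝ) (hC : InvP K C (V k)) : ∃ C', InvP K C' (V (k-1)) := by
  set D : ℝ := Real.exp (-2 * r k * tauBS σ t k / (σ k)^2) with hD
  have hDpos : 0 < D := Real.exp_pos _
  have hstrict := vt_strict K hK r q σ t k hσ hτ hqk V Vt hVtk C hC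
  obtain ⟨hbd, hmono, -, -, -⟩ := hC
  have hVtnn : ∀ S : ℝ, 0 < S → 0 ≤ Vt (k-1) S := by
    intro S hS
    rw [hVtk S hS]
    exact mul_nonneg hDpos.le (intW r q σ t k hτ hbd hmono hS).2.1
  have hVtub : ∀ S : ℝ, 0 < S → Vt (k-1) S ≤ D * C := by
    intro S hS
    rw [hVtk S hS]
    exact mul_le_mul_of_nonneg_left (intW r q σ t k hτ hbd hmono hS).2.2 hDpos.le
  refine ⟨max (D * C) K, ?_, ?_, ?_, ?_, ?_⟩
  · intro s hs
    rw [hVk s hs]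
    constructor
    · exact le_trans (hVtnn s hs) (le_max_left _ _)
    · exact max_le (le_trans (hVtub s hs) (le_max_left _ _))
        (le_trans (by linarith) (le_max_right (D*C) K))
  · intro a b ha hab
    rcases eq_or_lt_of_le hab with h | h
    · rw [h]
    · have hb : 0 < b := ha.trans_le hab
      rw [hVk a ha, hVk b hb]
      have h1 := (hstrict a b ha h).1
      exact le_of_lt (max_lt_max (by linarith) (by linarith))
  · intro a b ha hab
    have hb : 0 < b := ha.trans hab
    rw [hVk a ha, hVk b hb, sub_le_iff_le_add]
    have h2 := (hstrict a b ha hab).2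
    refine max_le ?_ ?_
    · have := le_max_left (Vt (k-1) b) (K - b); linarith
    · have := le_max_right (Vt (k-1) b) (K - b); linarith
  · intro a b ha hab _
    have hb : 0 < b := ha.trans hab
    rw [hVk a ha, hVk b hb]
    have h1 := (hstrict a b ha hab).1
    have := max_lt_max (show Vt (k-1) b < Vt (k-1) a by linarith)
      (show K - b < K - a by linarith)
    linarith
  · intro a b hKa hab
    have ha : 0 < a := hK.trans hKa
    have hb : 0 < b := ha.trans hab
    rw [hVk a ha, hVk b hb]
    rw [max_eq_left (by linarith [hVtnn a ha] : K - a ≤ Vt (k-1) a)]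
    have h2 := (hstrict a b ha hab).2
    have := le_max_left (Vt (k-1) b) (K - b)
    linarith

lemma inv_base (K : ℝ) (hK : 0 < K) (W : ℝ → ℝ)
    (hW : ∀ S : ℝ, W S = max 0 (K - S)) : InvP K K W := by
  refine ⟨?_, ?_, ?_, ?_, ?_⟩
  · intro s hs
    rw [hW s]
    exact ⟨le_max_left _ _, max_le hK.le (by linarith)⟩
  · intro a b ha hab
    rw [hW a, hW b]
    exact max_le_max (le_refl 0) (by linarith)
  · intro a b ha hab
    rw [hW a, hW b, sub_le_iff_le_add]
    refine max_le ?_ ?_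
    · have := le_max_left (0:ℝ) (K - b); linarith
    · have := le_max_right (0:ℝ) (K - b); linarith
  · intro a b ha hab hbK
    rw [hW a, hW b, max_eq_right (by linarith : (0:ℝ) ≤ K - a),
      max_eq_right (by linarith : (0:ℝ) ≤ K - b)]
    linarith
  · intro a b hKa hab
    rw [hW a, hW b, max_eq_left (by linarith : K - a ≤ (0:ℝ)),
      max_eq_left (by linarith : K - b ≤ (0:ℝ))]
    linarith


/-- For the Bermudan put recursion with nonnegative yields `q_m ≥ 0`, the continuation
values satisfy `0 < Ṽ_m(S₁) - Ṽ_m(S₂) < S₂ - S₁` for all `0 < S₁ < S₂`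
and every `1 ≤ m ≤ M-1`. -/
theorem stmt6 (M : ℕ) (hM : 2 ≤ M) (K : ℝ) (hK : 0 < K) (t r q σ : ℕ → ℝ)
    (hq : ∀ m, 1 ≤ m → m ≤ M → 0 ≤ q m) (hσ : ∀ m, 0 < σ m)
    (ht : ∀ m, 1 ≤ m → m ≤ M → t (m - 1) < t m)
    (V Vt : ℕ → ℝ → ℝ)
    (hVM : ∀ S : ℝ, V M S = max 0 (K - S))
    (hVt : ∀ m, 1 ≤ m → m ≤ M → ∀ S : ℝ, 0 < S →
      Vt (m - 1) S = Real.exp (-2 * r m * tauBS σ t m / (σ m)^2) *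
        ∫ z in Set.Ioi (0:ℝ), V m (S * z) * rho1BS r q σ t m z)
    (hV : ∀ m, 1 ≤ m → m ≤ M → ∀ S : ℝ, 0 < S →
      V (m - 1) S = max (Vt (m - 1) S) (K - S)) :
    ∀ m, 1 ≤ m → m ≤ M - 1 → ∀ S1 S2 : ℝ, 0 < S1 → S1 < S2 →
      0 < Vt m S1 - Vt m S2 ∧ Vt m S1 - Vt m S2 < S2 - S1 := by
  have htau : ∀ m, 1 ≤ m → m ≤ M → 0 < tauBS σ t m := by
    intro m h1 h2
    unfold tauBS
    exact div_pos (mul_pos (pow_pos (hσ m) 2) (sub_pos.2 (ht m h1 h2))) two_pos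
  -- the invariant holds at every level `M - j` for `j ≤ M - 1`
  have hInv : ∀ j : ℕ, j ≤ M - 1 → ∃ C, InvP K C (V (M - j)) := by
    intro j
    induction j with
    | zero =>
      intro _
      rw [Nat.sub_zero]
      exact ⟨K, inv_base K hK (V M) hVM⟩
    | succ n ih =>
      intro hn
      obtain ⟨C, hC⟩ := ih (by omega)
      set k : ℕ := M - n with hk
      have hk1 : 1 ≤ k := by omega
      have hkM : k ≤ M := by omega
      have hkk : M - (n + 1) = k - 1 := by omega
      rw [hkk]
      exact inv_transfer K hK r q σ t k (hσ k) (htau k hk1 hkM) (hq k hk1 hkM)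
        V Vt (hVt k hk1 hkM) (hV k hk1 hkM) C hC
  intro m hm1 hmM S1 S2 hS1 hS12
  have hmM' : m + 1 ≤ M := by omega
  obtain ⟨C, hC⟩ := hInv (M - (m + 1)) (by omega)
  rw [show M - (M - (m + 1)) = m + 1 by omega] at hC
  have := vt_strict K hK r q σ t (m + 1) (hσ (m+1)) (htau (m+1) (by omega) hmM')
    (hq (m+1) (by omega) hmM') V Vt (hVt (m+1) (by omega) hmM') C hC S1 S2 hS1 hS12
  simpa using this
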